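/- Let 0 < α < 1/2 and let a = (a_k) be a nondecreasing bounded sequence with a_k → a_∞. Then for the discrete dissipation operator, lim_{k→∞} (ℒ^α a)_k = Σ_{n=0}^∞ (a_∞ − a_n) 2^{2αn}, provided the right-hand side converges; in particular if a is not eventually constant this limit is strictly positive. -/

import Mathlib

open Real Filter Finset

/-- The discrete dissipation operator `(ℒ^α a)_k`. -/
noncomputable def Ldiss (α : ℝ) (a : ℕ → ℝ) (k : ℕ) : ℝ :=
  (∑ n ∈ Finset.range k, (a k - a n) * (2:ℝ) ^ (2 * α * (n:ℝ))) +
  ∑' n : ℕ, (a k - a (k + 1 + n)) * (2:ℝ) ^ (2 * α * (k:ℝ)) * (2:ℝ) ^ (-(1:ℝ) - (n:ℝ))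

theorem stmt3 (α : ℝ) (hα0 : 0 < α) (hα1 : α < 1/2)
    (a : ℕ → ℝ) (hmono : Monotone a) (aInf : ℝ)
    (hlim : Filter.Tendsto a Filter.atTop (nhds aInf))
    (s : ℝ) (hs1 : 1 < s) (hs2 : 2 * α < s) (C : ℝ)
    (hXs : ∀ k : ℕ, |a (k+1) - a k| * (2:ℝ) ^ (s * ((k:ℝ)+1)) ≤ C)
    (hconv : Summable (fun n : ℕ => (aInf - a n) * (2:ℝ) ^ (2 * α * (n:ℝ)))) :
    Filter.Tendsto (fun k => Ldiss α a k) Filter.atTop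
      (nhds (∑' n : ℕ, (aInf - a n) * (2:ℝ) ^ (2 * α * (n:ℝ)))) ∧
    ((¬ ∃ N : ℕ, ∀ k ≥ N, a k = a N) →
      0 < ∑' n : ℕ, (aInf - a n) * (2:ℝ) ^ (2 * α * (n:ℝ))) := by
  have h2 : (0:ℝ) < 2 := two_pos
  have hle : ∀ n, a n ≤ aInf := fun n => hmono.ge_of_tendsto hlim n
  have hC0 : (0:ℝ) ≤ C := le_trans (by positivity) (hXs 0)
  have hs0 : (0:ℝ) < s := lt_trans one_pos hs1
  set r : ℝ := (2:ℝ) ^ (-s) with hr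
  have hr0 : 0 < r := rpow_pos_of_pos h2 _
  have hr1 : r < 1 := rpow_lt_one_of_one_lt_of_neg one_lt_two (by linarith)
  set D : ℝ := C * r * (1 - r)⁻¹ with hD
  have hD0 : 0 ≤ D := mul_nonneg (mul_nonneg hC0 hr0.le) (inv_nonneg.2 (by linarith))
  set R : ℝ := (2:ℝ) ^ (2 * α) with hR
  have hR1 : 1 < R := by
    have := rpow_lt_rpow_of_exponent_lt one_lt_two (show (0:ℝ) < 2 * α by linarith)
    simpa [rpow_zero] using this
  have hRk : ∀ k : ℕ, (2:ℝ) ^ (2 * α * (k:ℝ)) = R ^ k := by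
    intro k
    rw [hR, rpow_mul h2.le, rpow_natCast]
  have hrk : ∀ k : ℕ, (2:ℝ) ^ (-(s * (k:ℝ))) = r ^ k := by
    intro k
    rw [show -(s * (k:ℝ)) = (-s) * (k:ℝ) by ring, rpow_mul h2.le, rpow_natCast]
  -- step bound
  have hstep : ∀ j : ℕ, a (j+1) - a j ≤ C * (2:ℝ) ^ (-(s * ((j:ℝ)+1))) := by
    intro j
    have hp : (0:ℝ) < (2:ℝ) ^ (s * ((j:ℝ)+1)) := rpow_pos_of_pos h2 _
    have h := hXs j
    rw [abs_of_nonneg (sub_nonneg.2 (hmono (Nat.le_succ j)))] at h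
    have h' := (le_div_iff₀ hp).mpr h
    rwa [div_eq_mul_inv, ← rpow_neg h2.le] at h'
  -- tail bound
  have htail : ∀ k : ℕ, aInf - a k ≤ D * r ^ k := by
    intro k
    have hten : Tendsto (fun m => a (k + m) - a k) atTop (nhds (aInf - a k)) := by
      have h1 : Tendsto (fun m : ℕ => k + m) atTop atTop :=
        tendsto_atTop_atTop_of_monotone (fun _ _ h => by omega) (fun b => ⟨b, by omega⟩)
      exact (hlim.comp h1).sub_const (a k)
    refine le_of_tendsto hten (Eventually.of_forall fun m => ?_)
    have htel : a (k + m) - a k = ∑ j ∈ range m, (a (k + j + 1) - a (k + j)) :=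
      (Finset.sum_range_sub (fun j => a (k + j)) m).symm
    rw [htel]
    have hterm : ∀ j ∈ range m,
        a (k + j + 1) - a (k + j) ≤ (C * r ^ k * r) * r ^ j := by
      intro j _
      have h := hstep (k + j)
      have heq : C * (2:ℝ) ^ (-(s * ((↑(k+j):ℝ)+1))) = (C * r ^ k * r) * r ^ j := by
        have hexp : (-(s * ((↑(k+j):ℝ)+1))) = (-s * (k:ℝ)) + (-s) + (-s * (j:ℝ)) := by
          push_cast; ring
        rw [hr, hexp, rpow_add h2, rpow_add h2,
          ← rpow_natCast ((2:ℝ) ^ (-s)) k, ← rpow_natCast ((2:ℝ) ^ (-s)) j,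
          ← rpow_mul h2.le, ← rpow_mul h2.le]
        ring
      calc a (k + j + 1) - a (k + j) ≤ C * (2:ℝ) ^ (-(s * ((↑(k+j):ℝ)+1))) := h
        _ = (C * r ^ k * r) * r ^ j := heq
    have hgeom : ∑ j ∈ range m, r ^ j ≤ (1 - r)⁻¹ :=
      (Summable.sum_le_tsum _ (fun i _ => pow_nonneg hr0.le i)
        (summable_geometric_of_lt_one hr0.le hr1)).trans_eq
        (tsum_geometric_of_lt_one hr0.le hr1)
    calc ∑ j ∈ range m, (a (k + j + 1) - a (k + j))
        ≤ ∑ j ∈ range m, (C * r ^ k * r) * r ^ j := Finset.sum_le_sum hterm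
      _ = (C * r ^ k * r) * ∑ j ∈ range m, r ^ j := by rw [Finset.mul_sum]
      _ ≤ (C * r ^ k * r) * (1 - r)⁻¹ := by
          apply mul_le_mul_of_nonneg_left hgeom
          exact mul_nonneg (mul_nonneg hC0 (pow_nonneg hr0.le k)) hr0.le
      _ = D * r ^ k := by rw [hD]; ring
  -- geometric series 2^(-1-n)
  have hgeo : HasSum (fun n : ℕ => (2:ℝ) ^ (-(1:ℝ) - (n:ℝ))) 1 := by
    have heq : (fun n : ℕ => (2:ℝ) ^ (-(1:ℝ) - (n:ℝ)))
        = fun n : ℕ => (2⁻¹ : ℝ) * ((1:ℝ)/2) ^ n := by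
      funext n
      rw [show (-(1:ℝ) - (n:ℝ)) = -(1 + (n:ℝ)) by ring, rpow_neg h2.le, rpow_add h2,
        rpow_one, rpow_natCast]
      rw [mul_inv]
      rw [one_div, inv_pow]
    rw [heq]
    have h := hasSum_geometric_two.mul_left (2⁻¹ : ℝ)
    norm_num at h
    convert h using 2 <;> norm_num <;> rfl
  -- inner tsum bound
  set T : ℕ → ℝ := fun k => ∑' n : ℕ,
    (a k - a (k + 1 + n)) * (2:ℝ) ^ (2 * α * (k:ℝ)) * (2:ℝ) ^ (-(1:ℝ) - (n:ℝ)) with hT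
  have hTbound : ∀ k : ℕ, ‖T k‖ ≤ (aInf - a k) * R ^ k := by
    intro k
    have hak : 0 ≤ aInf - a k := sub_nonneg.2 (hle k)
    have hg : HasSum (fun n : ℕ => (aInf - a k) * R ^ k * (2:ℝ) ^ (-(1:ℝ) - (n:ℝ)))
        ((aInf - a k) * R ^ k) := by
      simpa using hgeo.mul_left ((aInf - a k) * R ^ k)
    refine tsum_of_norm_bounded hg fun n => ?_
    have h1 : |a k - a (k + 1 + n)| ≤ aInf - a k := by
      rw [abs_sub_comm, abs_of_nonneg (sub_nonneg.2 (hmono (by omega)))]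
      have := hle (k + 1 + n)
      have := hmono (show k ≤ k + 1 + n by omega)
      linarith
    have hp1 : (0:ℝ) < (2:ℝ) ^ (2 * α * (k:ℝ)) := rpow_pos_of_pos h2 _
    have hp2 : (0:ℝ) < (2:ℝ) ^ (-(1:ℝ) - (n:ℝ)) := rpow_pos_of_pos h2 _
    calc ‖(a k - a (k + 1 + n)) * (2:ℝ) ^ (2 * α * (k:ℝ)) * (2:ℝ) ^ (-(1:ℝ) - (n:ℝ))‖
        = |a k - a (k + 1 + n)| * (2:ℝ) ^ (2 * α * (k:ℝ)) * (2:ℝ) ^ (-(1:ℝ) - (n:ℝ)) := by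
          rw [Real.norm_eq_abs, abs_mul, abs_mul, abs_of_pos hp1, abs_of_pos hp2]
      _ ≤ (aInf - a k) * (2:ℝ) ^ (2 * α * (k:ℝ)) * (2:ℝ) ^ (-(1:ℝ) - (n:ℝ)) := by
          exact mul_le_mul_of_nonneg_right (mul_le_mul_of_nonneg_right h1 hp1.le) hp2.le
      _ = (aInf - a k) * R ^ k * (2:ℝ) ^ (-(1:ℝ) - (n:ℝ)) := by rw [hRk]
  -- partial sums
  set P : ℕ → ℝ := fun k => ∑ n ∈ range k, (aInf - a n) * (2:ℝ) ^ (2 * α * (n:ℝ)) with hP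
  have hdiff : ∀ k : ℕ, Ldiss α a k - P k
      = (a k - aInf) * (∑ n ∈ range k, (2:ℝ) ^ (2 * α * (n:ℝ))) + T k := by
    intro k
    show (∑ n ∈ range k, (a k - a n) * (2:ℝ) ^ (2 * α * (n:ℝ))) + T k - P k = _
    rw [add_sub_right_comm, hP]
    congr 1
    rw [← Finset.sum_sub_distrib, Finset.mul_sum]
    apply Finset.sum_congr rfl
    intro n _
    ring
  have hQ : ∀ k : ℕ, ∑ n ∈ range k, (2:ℝ) ^ (2 * α * (n:ℝ)) ≤ R ^ k * (R - 1)⁻¹ := by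
    intro k
    have heq : ∑ n ∈ range k, (2:ℝ) ^ (2 * α * (n:ℝ)) = ∑ n ∈ range k, R ^ n :=
      Finset.sum_congr rfl fun n _ => hRk n
    rw [heq, geom_sum_eq hR1.ne' k, div_eq_mul_inv]
    apply mul_le_mul_of_nonneg_right _ (inv_nonneg.2 (by linarith))
    linarith [pow_pos (lt_trans one_pos hR1) k]
  have hQ0 : ∀ k : ℕ, (0:ℝ) ≤ ∑ n ∈ range k, (2:ℝ) ^ (2 * α * (n:ℝ)) :=
    fun k => Finset.sum_nonneg fun n _ => (rpow_pos_of_pos h2 _).le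
  set E : ℝ := D * ((R - 1)⁻¹ + 1) with hE
  have hbound : ∀ k : ℕ, ‖Ldiss α a k - P k‖ ≤ E * (R * r) ^ k := by
    intro k
    have hak : 0 ≤ aInf - a k := sub_nonneg.2 (hle k)
    have hDr : aInf - a k ≤ D * r ^ k := htail k
    rw [hdiff k]
    calc ‖(a k - aInf) * (∑ n ∈ range k, (2:ℝ) ^ (2 * α * (n:ℝ))) + T k‖
        ≤ ‖(a k - aInf) * (∑ n ∈ range k, (2:ℝ) ^ (2 * α * (n:ℝ)))‖ + ‖T k‖ := norm_add_le _ _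
      _ ≤ (aInf - a k) * (R ^ k * (R - 1)⁻¹) + (aInf - a k) * R ^ k := by
          apply add_le_add _ (hTbound k)
          rw [norm_mul, Real.norm_eq_abs, Real.norm_eq_abs, abs_sub_comm,
            abs_of_nonneg hak, abs_of_nonneg (hQ0 k)]
          exact mul_le_mul_of_nonneg_left (hQ k) hak
      _ ≤ (D * r ^ k) * (R ^ k * (R - 1)⁻¹) + (D * r ^ k) * R ^ k := by
          apply add_le_add
          · exact mul_le_mul_of_nonneg_right hDr
              (mul_nonneg (pow_nonneg (by linarith) k) (inv_nonneg.2 (by linarith)))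
          · exact mul_le_mul_of_nonneg_right hDr (pow_nonneg (by linarith) k)
      _ = E * (R * r) ^ k := by rw [hE, mul_pow]; ring
  have hq0 : (0:ℝ) ≤ R * r := mul_nonneg (by linarith) hr0.le
  have hq1 : R * r < 1 := by
    have : R * r = (2:ℝ) ^ (2 * α - s) := by
      rw [hR, hr, ← rpow_add h2]
      ring_nf
    rw [this]
    exact rpow_lt_one_of_one_lt_of_neg one_lt_two (by linarith)
  have hzero : Tendsto (fun k => Ldiss α a k - P k) atTop (nhds 0) := by
    refine squeeze_zero_norm hbound ?_
    have := (tendsto_pow_atTop_nhds_zero_of_lt_one hq0 hq1).const_mul E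
    simpa using this
  have hPt : Tendsto P atTop (nhds (∑' n : ℕ, (aInf - a n) * (2:ℝ) ^ (2 * α * (n:ℝ)))) :=
    hconv.hasSum.tendsto_sum_nat
  constructor
  · have := hzero.add hPt
    simpa using this
  · intro hNC
    have hlt : ∃ n, a n < aInf := by
      by_contra h
      push_neg at h
      exact hNC ⟨0, fun k _ => le_antisymm ((hle k).trans (h 0)) (hmono (Nat.zero_le k))⟩
    obtain ⟨n, hn⟩ := hlt
    exact Summable.tsum_pos hconv
      (fun i => mul_nonneg (sub_nonneg.2 (hle i)) (rpow_pos_of_pos h2 _).le) n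
      (mul_pos (sub_pos.2 hn) (rpow_pos_of_pos h2 _))
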